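/- Let p be a prime. For each n ≥ 1 choose α_n ∈ ℚ̄ with φ_p^n(α_n) = 1, where φ_p(x) = (x^p − x)/p. Then {α_n} is a sequence of pairwise distinct totally p-adic algebraic numbers with h(α_n) ≤ log(p+1)/(p−1) for all n ≥ 1. In particular, for every real B > log(p+1)/(p−1), the set of totally p-adic algebraic numbers α with h(α) ≤ B is infinite. -/

import Mathlib

open Polynomial

/-- The least positive integer `c` such that `c·P` has integer coefficients (the lcm of the
denominators of the coefficients of `P ∈ ℚ[x]`). -/
def ratDen (P : Polynomial ℚ) : ℕ :=
  (Finset.range (P.natDegree + 1)).lcm fun i => (P.coeff i).den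

/-- The absolute logarithmic Weil height of an algebraic number `α ∈ ℂ`:
if `P = minpoly ℚ α` has degree `d`, denominator `c = ratDen P`, and complex roots
`β_1, …, β_d`, then `h(α) = (1/d)(log c + Σ_i log⁺|β_i|)`.  (By Gauss's lemma and the
product formula this agrees with the usual definition
`h(α) = (1/[ℚ(α):ℚ]) Σ_{v ∈ M_ℚ} Σ_{β ∈ O_α} log⁺|β|_v`.) -/
noncomputable def weilHeight (α : ℂ) : ℝ :=
  ((minpoly ℚ α).natDegree : ℝ)⁻¹ *
    (Real.log (ratDen (minpoly ℚ α)) +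
      (((minpoly ℚ α).aroots ℂ).map fun β => Real.log (max 1 ‖β‖)).sum)

/-- The map `φ_p(x) = (x^p − x)/p` on the complex numbers. -/
noncomputable def phiC (p : ℕ) : ℂ → ℂ := fun x => (x ^ p - x) / p

namespace TPA
variable (p : ℕ) [hp : Fact p.Prime]

/-- `eE p n = 1 + p + ... + p^(n-1)`. -/
def eE : ℕ → ℕ
  | 0 => 0
  | n+1 => p * eE n + 1

/-- `SP p n` is the monic integer polynomial `p^(eE p n) * φ_p^n(X)`. -/
noncomputable def SP : ℕ → ℤ[X]
  | 0 => X
  | n+1 => (SP n) ^ p - C ((p : ℤ) ^ ((p - 1) * eE p n)) * SP n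

lemma SP_monic_deg (n : ℕ) : (SP p n).Monic ∧ (SP p n).natDegree = p ^ n := by
  induction n with
  | zero => exact ⟨monic_X, natDegree_X⟩
  | succ n ih =>
    obtain ⟨hm, hd⟩ := ih
    have hpow : ((SP p n) ^ p).Monic := hm.pow p
    have hdp : ((SP p n) ^ p).natDegree = p ^ (n+1) := by
      rw [natDegree_pow, hd]; ring
    have hlt : (-(C ((p : ℤ) ^ ((p - 1) * eE p n)) * SP p n)).degree < ((SP p n) ^ p).degree := by
      rw [degree_neg, degree_eq_natDegree hpow.ne_zero, hdp]
      calc (C ((p : ℤ) ^ ((p - 1) * eE p n)) * SP p n).degree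
          ≤ (C ((p : ℤ) ^ ((p - 1) * eE p n))).degree + (SP p n).degree := degree_mul_le _ _
        _ ≤ 0 + (SP p n).degree := add_le_add_left degree_C_le _
        _ = (SP p n).degree := zero_add _
        _ ≤ ((SP p n).natDegree : WithBot ℕ) := degree_le_natDegree
        _ < ((p ^ (n+1) : ℕ) : WithBot ℕ) := by
            rw [hd]; exact_mod_cast Nat.pow_lt_pow_succ hp.out.one_lt
    have heq : SP p (n+1) = (SP p n) ^ p + -(C ((p : ℤ) ^ ((p - 1) * eE p n)) * SP p n) := by
      rw [SP]; ring
    constructor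
    · rw [heq]; exact hpow.add_of_left hlt
    · rw [heq, natDegree_eq_of_degree_eq (degree_add_eq_left_of_degree_lt hlt), hdp]

lemma key_exp (n : ℕ) : (p - 1) * eE p n + eE p n = p * eE p n := by
  have h1 : 1 ≤ p := hp.out.one_le
  rw [Nat.sub_one_mul, Nat.sub_add_cancel (Nat.le_mul_of_pos_left _ (by omega))]

lemma aeval_SP (n : ℕ) (x : ℂ) :
    aeval x (SP p n) = (p : ℂ) ^ (eE p n) * (phiC p)^[n] x := by
  have hp0 : (p : ℂ) ≠ 0 := Nat.cast_ne_zero.mpr hp.out.pos.ne'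
  induction n with
  | zero => simp [SP, eE]
  | succ n ih =>
    rw [SP, eE]
    simp only [map_sub, map_mul, map_pow, aeval_C, ih, Function.iterate_succ_apply']
    push_cast
    set u := (phiC p)^[n] x with hu
    have h1 : ((p : ℂ) ^ eE p n * u) ^ p = (p : ℂ) ^ (p * eE p n) * u ^ p := by
      rw [mul_pow, ← pow_mul, mul_comm (eE p n) p]
    have h2 : (p : ℂ) ^ ((p - 1) * eE p n) * ((p : ℂ) ^ eE p n * u)
        = (p : ℂ) ^ (p * eE p n) * u := by
      rw [← mul_assoc, ← pow_add, key_exp]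
    rw [h1, h2]
    have h3 : phiC p u = (u ^ p - u) / p := rfl
    rw [h3, pow_succ]
    field_simp

lemma abs_step {x y : ℂ} (h : phiC p x = y)
    (hy : ‖y‖ ^ (p - 1) ≤ p + 1) :
    ‖x‖ ^ (p - 1) ≤ p + 1 := by
  have hp2 : 2 ≤ p := hp.out.two_le
  have hp0 : (p : ℂ) ≠ 0 := Nat.cast_ne_zero.mpr hp.out.pos.ne'
  set A := ‖x‖ with hA
  set B := ‖y‖ with hB
  by_contra hx
  push_neg at hx
  have hA0 : 0 ≤ A := norm_nonneg x
  have hB0 : 0 ≤ B := norm_nonneg y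
  have hx1 : 1 < A := by
    by_contra h1
    push_neg at h1
    have : A ^ (p - 1) ≤ 1 := pow_le_one₀ hA0 h1
    have hp0' : (0:ℝ) ≤ p := Nat.cast_nonneg p
    linarith
  have hxy : B < A := by
    by_contra h2
    push_neg at h2
    have := pow_le_pow_left₀ hA0 h2 (p - 1)
    linarith
  have hxp : x ^ p = x + p * y := by
    have h' : (x ^ p - x) / (p : ℂ) = y := h
    field_simp at h'
    linear_combination h'
  have h5 : A ^ p ≤ A + p * B := by
    calc A ^ p = ‖x ^ p‖ := (norm_pow _ _).symm
      _ = ‖x + p * y‖ := by rw [hxp]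
      _ ≤ ‖x‖ + ‖(p : ℂ) * y‖ := norm_add_le _ _
      _ = A + p * B := by rw [norm_mul, Complex.norm_natCast]
  have hsplit : A ^ p = A ^ (p - 1) * A := by
    rw [← pow_succ]
    congr 1
    omega
  have hA0' : 0 < A := lt_trans one_pos hx1
  have e1 : ((p : ℝ) + 1) * A < A ^ (p - 1) * A := mul_lt_mul_of_pos_right hx hA0'
  have e2 : (p : ℝ) * B ≤ p * A := mul_le_mul_of_nonneg_left hxy.le (Nat.cast_nonneg p)
  rw [hsplit] at h5
  linarith

lemma abs_of_iter (n : ℕ) (x : ℂ) (h : (phiC p)^[n] x = 1) :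
    ‖x‖ ^ (p - 1) ≤ p + 1 := by
  induction n generalizing x with
  | zero =>
    simp only [Function.iterate_zero, id_eq] at h
    subst h
    simp only [norm_one, one_pow]
    have : (0:ℝ) ≤ p := Nat.cast_nonneg p
    linarith
  | succ n ih =>
    rw [Function.iterate_succ_apply] at h
    exact abs_step p rfl (ih _ h)

lemma log_bound {x : ℂ} (h : ‖x‖ ^ (p - 1) ≤ p + 1) :
    Real.log (max 1 ‖x‖) ≤ Real.log ((p : ℝ) + 1) / ((p : ℝ) - 1) := by
  have hp2 : 2 ≤ p := hp.out.two_le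
  have hp2' : (2:ℝ) ≤ p := by exact_mod_cast hp2
  have hd : (0:ℝ) < (p : ℝ) - 1 := by linarith
  have hlogn : 0 ≤ Real.log ((p : ℝ) + 1) := Real.log_nonneg (by linarith)
  have hcast : ((p - 1 : ℕ) : ℝ) = (p : ℝ) - 1 := by
    have : 1 ≤ p := hp.out.one_le
    push_cast [Nat.cast_sub this]
    ring
  rcases le_or_gt ‖x‖ 1 with h1 | h1
  · rw [max_eq_left h1, Real.log_one]
    exact div_nonneg hlogn hd.le
  · rw [max_eq_right h1.le, le_div_iff₀ hd, mul_comm, ← hcast, ← Real.log_pow]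
    exact Real.log_le_log (pow_pos (lt_trans one_pos h1) _) h

/-- ultrametric helper: in ℚ_p, if ‖u‖ < ‖v‖ then ‖u + v‖ = ‖v‖. -/
lemma padic_add_eq {u v : ℚ_[p]} (h : ‖u‖ < ‖v‖) : ‖u + v‖ = ‖v‖ := by
  have := Padic.add_eq_max_of_ne (q := u) (r := v) (ne_of_lt h)
  rw [this, max_eq_right h.le]

noncomputable def WP (y : ℚ_[p]) : (ℚ_[p])[X] := X ^ p - X - C ((p : ℚ_[p]) * y)

lemma WP_monic (y : ℚ_[p]) : (WP p y).Monic ∧ (WP p y).natDegree = p := by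
  have hp1 : 1 < p := hp.out.one_lt
  have h1 : WP p y = X ^ p + (-(X + C ((p : ℚ_[p]) * y))) := by rw [WP]; ring
  have hlt : (-(X + C ((p : ℚ_[p]) * y))).degree < (X ^ p : (ℚ_[p])[X]).degree := by
    rw [degree_neg, degree_X_pow]
    calc (X + C ((p : ℚ_[p]) * y)).degree ≤ 1 := by
          apply (degree_add_le _ _).trans
          apply max_le degree_X_le
          exact degree_C_le.trans (by norm_num)
      _ < (p : WithBot ℕ) := by exact_mod_cast hp1
  constructor
  · rw [h1]; exact (monic_X_pow p).add_of_left hlt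
  · have : (WP p y).degree = (p : WithBot ℕ) := by
      rw [h1, degree_add_eq_left_of_degree_lt hlt, degree_X_pow]
    exact natDegree_eq_of_degree_eq_some this

lemma padicInt_add_eq {u v : ℤ_[p]} (h : ‖u‖ < ‖v‖) : ‖u + v‖ = ‖v‖ := by
  rw [PadicInt.norm_add_eq_max_of_ne (ne_of_lt h), max_eq_right h.le]

lemma norm_p_lt_one' : ‖(p : ℤ_[p])‖ < 1 := by
  rw [PadicInt.norm_p]
  have hp1 : (1:ℝ) < p := by exact_mod_cast hp.out.one_lt
  rw [inv_lt_one_iff₀]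
  right; exact hp1

/-- Hensel lifting: for each residue `a < p`, there is a root of `X^p - X - p*y`
in `ℤ_p` that is within distance `< 1` of `a`. -/
lemma hensel_root (y : ℤ_[p]) (a : ℕ) :
    ∃ z : ℤ_[p], z ^ p - z - p * y = 0 ∧ ‖z - (a : ℤ_[p])‖ < 1 := by
  set F : (ℤ_[p])[X] := X ^ p - X - C ((p : ℤ_[p]) * y) with hF
  have hderiv : F.derivative = C ((p : ℤ_[p])) * X ^ (p - 1) - 1 := by
    rw [hF]
    simp [derivative_X_pow]
  have hdF : ‖F.derivative.eval (a : ℤ_[p])‖ = 1 := by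
    rw [hderiv]
    simp only [eval_sub, eval_mul, eval_C, eval_pow, eval_X, eval_one]
    have hlt : ‖(p : ℤ_[p]) * (a : ℤ_[p]) ^ (p - 1)‖ < 1 := by
      calc ‖(p : ℤ_[p]) * (a : ℤ_[p]) ^ (p - 1)‖
          = ‖(p : ℤ_[p])‖ * ‖(a : ℤ_[p]) ^ (p - 1)‖ := norm_mul _ _
        _ ≤ ‖(p : ℤ_[p])‖ * 1 := by
            apply mul_le_mul_of_nonneg_left (PadicInt.norm_le_one _) (norm_nonneg _)
        _ < 1 := by rw [mul_one]; exact norm_p_lt_one' p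
    have h1 : (p : ℤ_[p]) * (a : ℤ_[p]) ^ (p - 1) - 1
        = (p : ℤ_[p]) * (a : ℤ_[p]) ^ (p - 1) + (-1) := by ring
    rw [h1, padicInt_add_eq p (show ‖(p : ℤ_[p]) * (a : ℤ_[p]) ^ (p - 1)‖ < ‖(-1 : ℤ_[p])‖ by
      rw [norm_neg, norm_one]; exact hlt), norm_neg, norm_one]
  have hevF : ‖F.eval (a : ℤ_[p])‖ < 1 := by
    have hev : F.eval (a : ℤ_[p]) = ((a ^ p - a : ℤ) : ℤ_[p]) + (-((p : ℤ_[p]) * y)) := by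
      rw [hF]; push_cast; ring_nf; simp [eval_sub, eval_pow, eval_X, eval_C]; ring
    rw [hev]
    apply lt_of_le_of_lt (PadicInt.nonarchimedean _ _)
    apply max_lt
    · rw [PadicInt.norm_int_lt_one_iff_dvd]
      apply (ZMod.intCast_zmod_eq_zero_iff_dvd _ p).mp
      push_cast
      rw [ZMod.pow_card]
      ring
    · rw [norm_neg]
      calc ‖(p : ℤ_[p]) * y‖ = ‖(p : ℤ_[p])‖ * ‖y‖ := norm_mul _ _
        _ ≤ ‖(p : ℤ_[p])‖ * 1 := mul_le_mul_of_nonneg_left (PadicInt.norm_le_one _) (norm_nonneg _)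
        _ < 1 := by rw [mul_one]; exact norm_p_lt_one' p
  have hh : ‖F.eval (a : ℤ_[p])‖ < ‖F.derivative.eval (a : ℤ_[p])‖ ^ 2 := by
    rw [hdF]; simpa using hevF
  obtain ⟨z, hz0, hz1, -, -⟩ := hensels_lemma hh
  refine ⟨z, ?_, by rw [coe_aeval_eq_eval] at hz1; rwa [hdF] at hz1⟩
  have := hz0
  rw [hF] at this
  simpa [eval_sub, eval_pow, eval_X, eval_C, sub_eq_zero] using this

lemma WP_splits (y : ℚ_[p]) (hy : ‖y‖ ≤ 1) :
    (WP p y).Splits ∧ ∀ r ∈ (WP p y).roots, ‖r‖ ≤ 1 := by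
  classical
  obtain ⟨hmon, hdeg⟩ := WP_monic p y
  have hne : WP p y ≠ 0 := hmon.ne_zero
  -- roots have norm ≤ 1
  have hroots : ∀ r ∈ (WP p y).roots, ‖r‖ ≤ 1 := by
    intro r hr
    have hr0 : r ^ p = r + (p : ℚ_[p]) * y := by
      have := isRoot_of_mem_roots hr
      rw [WP] at this
      simp only [IsRoot, eval_sub, eval_pow, eval_X, eval_C] at this
      linear_combination this
    by_contra hc
    push_neg at hc
    have hpy : ‖(p : ℚ_[p]) * y‖ < ‖r‖ := by
      calc ‖(p : ℚ_[p]) * y‖ = ‖(p : ℚ_[p])‖ * ‖y‖ := norm_mul _ _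
        _ ≤ ‖(p : ℚ_[p])‖ * 1 := mul_le_mul_of_nonneg_left hy (norm_nonneg _)
        _ ≤ 1 := by
            rw [mul_one, Padic.norm_p]
            exact inv_le_one_of_one_le₀ (by exact_mod_cast hp.out.one_le)
        _ < ‖r‖ := hc
    have h1 : ‖r ^ p‖ ≤ ‖r‖ := by
      rw [hr0]
      exact (Padic.nonarchimedean _ _).trans (max_le le_rfl hpy.le)
    rw [norm_pow] at h1
    have h2 : ‖r‖ ^ 1 < ‖r‖ ^ p := pow_lt_pow_right₀ hc hp.out.one_lt
    rw [pow_one] at h2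
    linarith
  refine ⟨?_, hroots⟩
  -- construct p distinct roots via Hensel
  set y' : ℤ_[p] := ⟨y, hy⟩ with hy'
  have hz := fun a : Fin p => hensel_root p y' a
  choose z hz0 hz1 using hz
  set r : Fin p → ℚ_[p] := fun a => ((z a : ℤ_[p]) : ℚ_[p]) with hr
  have hrmem : ∀ a : Fin p, r a ∈ (WP p y).roots := by
    intro a
    rw [mem_roots hne]
    have := congrArg (fun t : ℤ_[p] => (t : ℚ_[p])) (hz0 a)
    push_cast at this
    rw [IsRoot, WP]
    simp only [eval_sub, eval_pow, eval_X, eval_C]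
    have hra : r a = ((z a : ℤ_[p]) : ℚ_[p]) := rfl
    rw [hra]
    linear_combination this
  have hinj : Function.Injective r := by
    intro a b hab
    by_contra hne'
    -- ‖(a - b : ℤ_[p])‖ = 1
    have hab' : ((z a : ℤ_[p]) : ℚ_[p]) = ((z b : ℤ_[p]) : ℚ_[p]) := hab
    have hzab : z a = z b := Subtype.coe_injective hab'
    have hsmall : ‖(z a - (a : ℤ_[p])) - (z b - (b : ℤ_[p]))‖ < 1 := by
      have h := PadicInt.nonarchimedean (z a - (a : ℤ_[p])) (-(z b - (b : ℤ_[p])))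
      rw [← sub_eq_add_neg] at h
      refine lt_of_le_of_lt h (max_lt (hz1 a) ?_)
      rw [norm_neg]; exact hz1 b
    have hd1 : ‖((a : ℤ_[p]) - (b : ℤ_[p]))‖ = 1 := by
      have hcast : ((a : ℤ_[p]) - (b : ℤ_[p])) = (((a : ℤ) - (b : ℤ) : ℤ) : ℤ_[p]) := by
        push_cast; ring
      rw [hcast]
      refine le_antisymm (PadicInt.norm_le_one _) ?_
      by_contra hlt
      push_neg at hlt
      have hdvd : (p : ℤ) ∣ ((a : ℤ) - (b : ℤ)) :=
        (PadicInt.norm_int_lt_one_iff_dvd _).mp (lt_of_not_ge (by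
          intro hle
          exact absurd (lt_of_lt_of_le hlt hle) (lt_irrefl _)))
      have : ((a : ℕ) : ZMod p) = ((b : ℕ) : ZMod p) := by
        have h0 : (((a : ℤ) - (b : ℤ) : ℤ) : ZMod p) = 0 :=
          (ZMod.intCast_zmod_eq_zero_iff_dvd _ p).mpr hdvd
        push_cast at h0
        rw [sub_eq_zero] at h0
        exact_mod_cast h0
      have ha' : ((a : ℕ) : ZMod p).val = (a : ℕ) := ZMod.val_cast_of_lt a.2
      have hb' : ((b : ℕ) : ZMod p).val = (b : ℕ) := ZMod.val_cast_of_lt b.2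
      apply hne'
      apply Fin.ext
      rw [← ha', ← hb', this]
    have : (0:ℝ) < 1 := one_pos
    have hzz : ‖(z a - z b : ℤ_[p])‖ = 1 := by
      have hrw : z a - z b = ((z a - (a : ℤ_[p])) - (z b - (b : ℤ_[p]))) + ((a : ℤ_[p]) - (b : ℤ_[p])) := by ring
      rw [hrw, padicInt_add_eq p (by rw [hd1]; exact hsmall), hd1]
    rw [hzab] at hzz
    simp at hzz
  -- count roots
  have hcard : Multiset.card (WP p y).roots = p := by
    refine le_antisymm ((card_roots' _).trans_eq hdeg) ?_
    calc p = Fintype.card (Fin p) := (Fintype.card_fin p).symm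
      _ = (Finset.univ : Finset (Fin p)).card := rfl
      _ ≤ (WP p y).roots.toFinset.card := by
          apply Finset.card_le_card_of_injOn r
          · intro a _
            rw [Finset.mem_coe, Multiset.mem_toFinset]
            exact hrmem a
          · exact hinj.injOn
      _ ≤ Multiset.card (WP p y).roots := (WP p y).roots.toFinset_card_le
  exact splits_iff_card_roots.mpr (hcard.trans hdeg.symm)

lemma splits_multiset_prod' (m : Multiset (ℚ_[p])[X])
    (h : ∀ f ∈ m, f.Splits) : m.prod.Splits := by
  exact Splits.multisetProd h

lemma SP_splits (n : ℕ) (y : ℚ_[p]) (hy : ‖y‖ ≤ 1) :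
    ((SP p n).map (Int.castRingHom ℚ_[p]) - C ((p : ℚ_[p]) ^ eE p n * y)).Splits ∧
    ∀ z ∈ ((SP p n).map (Int.castRingHom ℚ_[p]) - C ((p : ℚ_[p]) ^ eE p n * y)).roots, ‖z‖ ≤ 1 := by
  have hp0 : (p : ℚ_[p]) ≠ 0 := Nat.cast_ne_zero.mpr hp.out.pos.ne'
  induction n generalizing y with
  | zero =>
    have h0 : (SP p 0).map (Int.castRingHom ℚ_[p]) - C ((p : ℚ_[p]) ^ eE p 0 * y) = X - C y := by
      simp [SP, eE]
    rw [h0]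
    refine ⟨Splits.X_sub_C _, ?_⟩
    intro z hz
    rw [roots_X_sub_C, Multiset.mem_singleton] at hz
    subst hz; exact hy
  | succ n ih =>
    obtain ⟨hWs, hWr⟩ := WP_splits p y hy
    obtain ⟨hWm, hWd⟩ := WP_monic p y
    have hWcard : Multiset.card (WP p y).roots = p := by rw [splits_iff_card_roots.mp hWs, hWd]
    have hprod : WP p y = ((WP p y).roots.map fun r => X - C r).prod :=
      hWs.eq_prod_roots_of_monic hWm
    obtain ⟨hSm, hSd⟩ := SP_monic_deg p n
    set U : ℚ_[p] := (p : ℚ_[p]) ^ eE p n with hU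
    have hU0 : U ≠ 0 := pow_ne_zero _ hp0
    have hV0 : U ^ (p - 1) ≠ 0 := pow_ne_zero _ hU0
    set S' : (ℚ_[p])[X] := (SP p n).map (Int.castRingHom ℚ_[p]) with hS'
    have hfacne : ∀ r : ℚ_[p], S' - C (U * r) ≠ 0 := by
      intro r
      have hnd : (S' - C (U * r)).natDegree = p ^ n := by
        rw [natDegree_sub_C, hS', hSm.natDegree_map, hSd]
      apply ne_zero_of_natDegree_gt (n := 0)
      rw [hnd]
      exact pow_pos hp.out.pos n
    -- the key identity
    have hkey : (SP p (n+1)).map (Int.castRingHom ℚ_[p]) - C ((p : ℚ_[p]) ^ eE p (n+1) * y)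
        = ((WP p y).roots.map fun r => S' - C (U * r)).prod := by
      apply Polynomial.funext
      intro t
      set s : ℚ_[p] := S'.eval t with hs
      have hmapev : eval t ((SP p (n+1)).map (Int.castRingHom ℚ_[p]))
          = s ^ p - (p : ℚ_[p]) ^ ((p - 1) * eE p n) * s := by
        rw [SP]
        simp only [Polynomial.map_sub, Polynomial.map_mul, Polynomial.map_pow, map_C,
          eval_sub, eval_mul, eval_pow, eval_C, hS', map_pow, map_intCast, map_natCast,
          Polynomial.map_natCast, Polynomial.eval_natCast]
        try push_cast
        try ring
      have hWev := congrArg (eval (s / U)) hprod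
      rw [eval_multiset_prod, Multiset.map_map] at hWev
      simp only [Function.comp_def, eval_sub, eval_X, eval_C] at hWev
      have hWev' : ((WP p y).roots.map fun r => s / U - r).prod
          = (s / U) ^ p - s / U - (p : ℚ_[p]) * y := by
        rw [← hWev]
        simp [WP]
      have hRHS : eval t (((WP p y).roots.map fun r => S' - C (U * r)).prod)
          = U ^ p * ((s / U) ^ p - s / U - (p : ℚ_[p]) * y) := by
        rw [eval_multiset_prod, Multiset.map_map]
        simp only [Function.comp_def]
        have hfac : ((WP p y).roots.map fun r => eval t (S' - C (U * r))).prod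
            = ((WP p y).roots.map fun r => U * (s / U - r)).prod := by
          congr 1
          apply Multiset.map_congr rfl
          intro r _
          rw [eval_sub, eval_C, ← hs]
          field_simp
        rw [hfac]
        have hmm := Multiset.prod_map_mul (m := (WP p y).roots)
          (f := fun _ => U) (g := fun r => s / U - r)
        rw [hmm, Multiset.map_const', Multiset.prod_replicate, hWcard, hWev']
      rw [eval_sub, eval_C, hmapev, hRHS]
      have hc1 : (p : ℚ_[p]) ^ ((p - 1) * eE p n) = U ^ (p - 1) := by
        rw [hU, ← pow_mul, mul_comm]
      have hc2 : (p : ℚ_[p]) ^ (eE p (n+1)) = (p : ℚ_[p]) * U ^ p := by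
        rw [eE, hU, ← pow_mul, pow_succ, mul_comm ((p:ℚ_[p]) ^ (p * eE p n)) _]
        rw [mul_comm p (eE p n)]
      have hUp : U ^ p = U ^ (p - 1) * U := by
        rw [← pow_succ]
        congr 1
        have := hp.out.one_le
        omega
      rw [hc1, hc2, div_pow, hUp]
      set V := U ^ (p - 1) with hV
      field_simp
    have hLne : (SP p (n+1)).map (Int.castRingHom ℚ_[p]) - C ((p : ℚ_[p]) ^ eE p (n+1) * y) ≠ 0 := by
      have hnd : ((SP p (n+1)).map (Int.castRingHom ℚ_[p])
          - C ((p : ℚ_[p]) ^ eE p (n+1) * y)).natDegree = p ^ (n+1) := by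
        rw [natDegree_sub_C, (SP_monic_deg p (n+1)).1.natDegree_map, (SP_monic_deg p (n+1)).2]
      apply ne_zero_of_natDegree_gt (n := 0)
      rw [hnd]
      exact pow_pos hp.out.pos (n+1)
    constructor
    · rw [hkey]
      apply splits_multiset_prod'
      intro f hf
      obtain ⟨r, hr, rfl⟩ := Multiset.mem_map.mp hf
      have hsp := (ih _ (hWr r hr)).1
      rw [hU]
      exact hsp
    · intro z hz
      have hzr : eval z ((SP p (n+1)).map (Int.castRingHom ℚ_[p])
          - C ((p : ℚ_[p]) ^ eE p (n+1) * y)) = 0 := (mem_roots hLne).mp hz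
      rw [hkey, eval_multiset_prod, Multiset.map_map] at hzr
      obtain ⟨w, hw, hw0⟩ := Multiset.mem_map.mp (Multiset.prod_eq_zero_iff.mp hzr)
      have hmem : z ∈ (S' - C (U * w)).roots := (mem_roots (hfacne w)).mpr hw0
      rw [hU] at hmem
      exact (ih _ (hWr w hw)).2 z hmem

lemma iterate_one_eq_zero (k : ℕ) (hk : 1 ≤ k) : (phiC p)^[k] (1 : ℂ) = 0 := by
  have h1 : phiC p 1 = 0 := by simp [phiC]
  have h0 : phiC p 0 = 0 := by simp [phiC, zero_pow hp.out.pos.ne']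
  obtain ⟨m, rfl⟩ : ∃ m, k = m + 1 := ⟨k - 1, by omega⟩
  rw [Function.iterate_succ_apply, h1]
  exact Function.iterate_fixed h0 m

noncomputable def HZ (n : ℕ) : ℤ[X] := SP p n - C ((p : ℤ) ^ eE p n)

lemma HZ_monic (n : ℕ) : (HZ p n).Monic := by
  obtain ⟨hm, hd⟩ := SP_monic_deg p n
  rw [HZ, sub_eq_add_neg, add_comm]
  apply hm.add_of_right
  rw [degree_neg]
  calc (C ((p : ℤ) ^ eE p n)).degree ≤ 0 := degree_C_le
    _ < (SP p n).degree := by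
        rw [degree_eq_natDegree hm.ne_zero, hd]
        exact_mod_cast pow_pos hp.out.pos n

lemma aeval_HZ (n : ℕ) {x : ℂ} (h : (phiC p)^[n] x = 1) :
    (aeval x) (HZ p n) = 0 := by
  rw [HZ, map_sub, aeval_C, aeval_SP, h]
  push_cast
  ring

lemma isIntegral_of_iter (n : ℕ) {x : ℂ} (h : (phiC p)^[n] x = 1) : IsIntegral ℤ x :=
  ⟨HZ p n, HZ_monic p n, by simpa [Polynomial.aeval_def] using aeval_HZ p n h⟩

lemma minpoly_eq_map {x : ℂ} (hx : IsIntegral ℤ x) :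
    minpoly ℚ x = (minpoly ℤ x).map (algebraMap ℤ ℚ) := by
  have := minpoly.isIntegrallyClosed_eq_field_fractions ℚ ℂ hx
  simpa using this

lemma minpoly_dvd_HZ (n : ℕ) {x : ℂ} (h : (phiC p)^[n] x = 1) :
    minpoly ℚ x ∣ (HZ p n).map (algebraMap ℤ ℚ) :=
  minpoly.dvd ℚ x (by rw [aeval_map_algebraMap]; exact aeval_HZ p n h)

lemma root_iter (n : ℕ) {x : ℂ} (h : (phiC p)^[n] x = 1) :
    ∀ β ∈ (minpoly ℚ x).aroots ℂ, (phiC p)^[n] β = 1 := by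
  intro β hβ
  have hβ0 : (aeval β) (minpoly ℚ x) = 0 := (mem_aroots.mp hβ).2
  obtain ⟨T, hT⟩ := minpoly_dvd_HZ p n h
  have h2 : (aeval β) ((HZ p n).map (algebraMap ℤ ℚ)) = 0 := by
    rw [hT, map_mul, hβ0, zero_mul]
  rw [aeval_map_algebraMap, HZ, map_sub, aeval_C, aeval_SP] at h2
  have hpne : (p : ℂ) ^ (eE p n) ≠ 0 :=
    pow_ne_zero _ (Nat.cast_ne_zero.mpr hp.out.pos.ne')
  push_cast at h2
  rw [sub_eq_zero] at h2
  exact mul_left_cancel₀ hpne (h2.trans (mul_one _).symm)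

lemma ratDen_minpoly {x : ℂ} (hx : IsIntegral ℤ x) : ratDen (minpoly ℚ x) = 1 := by
  have hmin := minpoly_eq_map hx
  apply Nat.dvd_one.mp
  apply Finset.lcm_dvd
  intro i _
  rw [hmin, coeff_map]
  simp [Rat.den_intCast]

lemma height_le (n : ℕ) {x : ℂ} (h : (phiC p)^[n] x = 1) :
    weilHeight x ≤ Real.log ((p : ℝ) + 1) / ((p : ℝ) - 1) := by
  have hint : IsIntegral ℤ x := isIntegral_of_iter p n h
  have hQ : IsIntegral ℚ x := hint.tower_top
  have hd : 0 < (minpoly ℚ x).natDegree := minpoly.natDegree_pos hQ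
  have h0 : ratDen (minpoly ℚ x) = 1 := ratDen_minpoly hint
  set b := Real.log ((p : ℝ) + 1) / ((p : ℝ) - 1) with hb
  have hble : ∀ t ∈ ((minpoly ℚ x).aroots ℂ).map fun β => Real.log (max 1 ‖β‖),
      t ≤ b := by
    intro t ht
    obtain ⟨β, hβ, rfl⟩ := Multiset.mem_map.mp ht
    exact log_bound p (abs_of_iter p n β (root_iter p n h β hβ))
  have hsum := Multiset.sum_le_card_nsmul _ b hble
  have hcard : Multiset.card ((minpoly ℚ x).aroots ℂ) = (minpoly ℚ x).natDegree := by
    rw [aroots_def, ← (IsAlgClosed.splits ((minpoly ℚ x).map (algebraMap ℚ ℂ))).natDegree_eq_card_roots, natDegree_map]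
  rw [Multiset.card_map, hcard] at hsum
  rw [weilHeight, h0]
  simp only [Nat.cast_one, Real.log_one, zero_add]
  have hdR : (0:ℝ) < ((minpoly ℚ x).natDegree : ℝ) := by exact_mod_cast hd
  calc ((minpoly ℚ x).natDegree : ℝ)⁻¹ *
        (((minpoly ℚ x).aroots ℂ).map fun β => Real.log (max 1 ‖β‖)).sum
      ≤ ((minpoly ℚ x).natDegree : ℝ)⁻¹ * ((minpoly ℚ x).natDegree • b) := by
        apply mul_le_mul_of_nonneg_left hsum (inv_nonneg.mpr hdR.le)
    _ = b := by
        rw [nsmul_eq_mul, ← mul_assoc, inv_mul_cancel₀ hdR.ne', one_mul]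

lemma minpoly_splits (n : ℕ) {x : ℂ} (h : (phiC p)^[n] x = 1) :
    ((minpoly ℚ x).map (algebraMap ℚ ℚ_[p])).Splits := by
  have hHne : (HZ p n).map (algebraMap ℤ ℚ) ≠ 0 :=
    ((HZ_monic p n).map _).ne_zero
  refine Splits.of_dvd ?_ (Polynomial.map_ne_zero hHne) (Polynomial.map_dvd _ (minpoly_dvd_HZ p n h))
  have hmm : ((HZ p n).map (algebraMap ℤ ℚ)).map (algebraMap ℚ ℚ_[p])
      = (HZ p n).map (Int.castRingHom ℚ_[p]) := by
    rw [Polynomial.map_map, show (algebraMap ℚ ℚ_[p]).comp (algebraMap ℤ ℚ)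
      = Int.castRingHom ℚ_[p] from Subsingleton.elim _ _]
  rw [hmm, HZ, Polynomial.map_sub, map_C]
  have hsp := (SP_splits p n 1 (by rw [norm_one])).1
  rw [mul_one] at hsp
  have hcc : ((Int.castRingHom ℚ_[p]) ((p : ℤ) ^ eE p n)) = ((p : ℚ_[p]) ^ eE p n) := by
    simp
  rw [hcc]
  exact hsp

end TPA

/-- (Theorem 1 of the paper.)  Let `p` be a prime and for each `n ≥ 1`
let `α_n ∈ ℚ̄` satisfy `φ_p^n(α_n) = 1`.  Then the `α_n` are pairwise distinct totally
`p`-adic algebraic numbers with `h(α_n) ≤ log(p+1)/(p−1)`.  In particular, for every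
`B > log(p+1)/(p−1)` the set of totally `p`-adic algebraic numbers of height at most `B`
is infinite. -/
theorem totally_p_adic_small_height_sequence (p : ℕ) [Fact p.Prime] (α : ℕ → ℂ)
    (hα : ∀ n : ℕ, 1 ≤ n → (phiC p)^[n] (α n) = 1) :
    (∀ m n : ℕ, 1 ≤ m → 1 ≤ n → m ≠ n → α m ≠ α n) ∧
    (∀ n : ℕ, 1 ≤ n →
      IsAlgebraic ℚ (α n) ∧ ((minpoly ℚ (α n)).map (algebraMap ℚ ℚ_[p])).Splits) ∧
    (∀ n : ℕ, 1 ≤ n → weilHeight (α n) ≤ Real.log ((p : ℝ) + 1) / ((p : ℝ) - 1)) ∧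
    (∀ B : ℝ, Real.log ((p : ℝ) + 1) / ((p : ℝ) - 1) < B →
      {x : ℂ | IsAlgebraic ℚ x ∧ ((minpoly ℚ x).map (algebraMap ℚ ℚ_[p])).Splits ∧
        weilHeight x ≤ B}.Infinite) := by
  have hdist : ∀ m n : ℕ, 1 ≤ m → 1 ≤ n → m ≠ n → α m ≠ α n := by
    have key : ∀ m n : ℕ, 1 ≤ m → m < n → α m ≠ α n := by
      intro m n hm hlt heq
      have h2 : (phiC p)^[n] (α m) = 1 := by rw [heq]; exact hα n (by omega)
      rw [show n = (n - m) + m from (by omega), Function.iterate_add_apply,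
        hα m hm, TPA.iterate_one_eq_zero p (n - m) (by omega)] at h2
      exact one_ne_zero h2.symm
    intro m n hm hn hmn
    rcases Nat.lt_or_ge m n with h | h
    · exact key m n hm h
    · exact fun heq => key n m hn (by omega) heq.symm
  have halg : ∀ n : ℕ, 1 ≤ n →
      IsAlgebraic ℚ (α n) ∧ ((minpoly ℚ (α n)).map (algebraMap ℚ ℚ_[p])).Splits := by
    intro n hn
    have hint : IsIntegral ℤ (α n) := TPA.isIntegral_of_iter p n (hα n hn)
    exact ⟨(hint.tower_top (A := ℚ)).isAlgebraic, TPA.minpoly_splits p n (hα n hn)⟩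
  have hht : ∀ n : ℕ, 1 ≤ n → weilHeight (α n) ≤ Real.log ((p : ℝ) + 1) / ((p : ℝ) - 1) :=
    fun n hn => TPA.height_le p n (hα n hn)
  refine ⟨hdist, halg, hht, ?_⟩
  intro B hB
  apply Set.infinite_of_injective_forall_mem (f := fun k : ℕ => α (k + 1))
  case hi =>
    intro a b hab
    by_contra hne
    exact hdist (a + 1) (b + 1) (by omega) (by omega) (by omega) hab
  case hf =>
    intro k
    refine ⟨(halg (k + 1) (by omega)).1, (halg (k + 1) (by omega)).2,
      le_trans (hht (k + 1) (by omega)) hB.le⟩
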